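/- (Stone representation theorem for Stone spaces) Every compact Hausdorff totally disconnected space X is homeomorphic to the Stone space 𝒰(Clop(X)) of its Boolean algebra of clopen sets, via the map sending x to the ultrafilter {U clopen : x ∈ U}. -/
import Mathlib


variable {B : Type*}

/-- A filter of a Boolean algebra: a nonempty subset closed under `⊓` and upward closed. -/
def IsBFilter [BooleanAlgebra B] (F : Set B) : Prop :=
  F.Nonempty ∧ (∀ x ∈ F, ∀ y ∈ F, x ⊓ y ∈ F) ∧ ∀ x ∈ F, ∀ y : B, x ≤ y → y ∈ F

/-- A proper filter: a filter not containing `⊥`. -/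
def IsProperBFilter [BooleanAlgebra B] (F : Set B) : Prop :=
  IsBFilter F ∧ (⊥ : B) ∉ F

/-- An ultrafilter: a proper filter containing exactly one of `x`, `xᶜ` for every `x`. -/
def IsBUltrafilter [BooleanAlgebra B] (F : Set B) : Prop :=
  IsProperBFilter F ∧ ∀ x : B, Xor' (x ∈ F) (xᶜ ∈ F)

/-- The underlying set of the Stone space of a Boolean algebra: its set of ultrafilters. -/
abbrev USpace (B : Type*) [BooleanAlgebra B] : Type _ := {F : Set B // IsBUltrafilter F}

/-- The basic (cl)open set `U_x` of ultrafilters containing `x`. -/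
def Ubasic [BooleanAlgebra B] (x : B) : Set (USpace B) := {F | x ∈ F.1}

/-- The Stone topology, generated by the basis `{U_x : x ∈ B}`. -/
instance (B : Type*) [BooleanAlgebra B] : TopologicalSpace (USpace B) :=
  TopologicalSpace.generateFrom (Set.range (Ubasic (B := B)))

open TopologicalSpace in
private lemma gmem_ultra' {X : Type*} [TopologicalSpace X] (x : X) :
    IsBUltrafilter {C : Clopens X | x ∈ C} := by
  refine ⟨⟨⟨⟨⊤, trivial⟩, fun a ha b hb => ⟨ha, hb⟩, fun a ha b hab => hab ha⟩, fun h => h⟩, ?_⟩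
  intro C
  by_cases h : x ∈ C
  · exact Or.inl ⟨h, fun hc => hc h⟩
  · exact Or.inr ⟨h, fun hc => h hc⟩

open TopologicalSpace in
/-- Stone representation theorem for Stone spaces: every compact Hausdorff totally disconnected
space `X` is homeomorphic to `𝒰(Clop(X))` via `x ↦ {U clopen : x ∈ U}`. -/
theorem stmt16 {X : Type*} [TopologicalSpace X] [CompactSpace X] [T2Space X]
    [TotallyDisconnectedSpace X] :
    ∃ g : X → USpace (Clopens X),
      (∀ (x : X) (C : Clopens X), C ∈ (g x).1 ↔ x ∈ (C : Set X)) ∧ IsHomeomorph g := by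
  classical
  refine ⟨fun x => ⟨{C : Clopens X | x ∈ C}, gmem_ultra' x⟩, fun x C => Iff.rfl, ?_, ?_, ?_, ?_⟩
  -- Continuity
  · rw [continuous_generateFrom_iff]
    rintro s ⟨C, rfl⟩
    exact C.isClopen.isOpen
  -- Open map
  · have hsurj : Function.Surjective
        (fun x : X => (⟨{C : Clopens X | x ∈ C}, gmem_ultra' x⟩ : USpace (Clopens X))) := by
      rintro ⟨F, hF⟩
      have htop : (⊤ : Clopens X) ∈ F := by
        obtain ⟨a, ha⟩ := hF.1.1.1
        exact hF.1.1.2.2 a ha ⊤ le_top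
      haveI : Nonempty {C : Clopens X // C ∈ F} := ⟨⟨⊤, htop⟩⟩
      have hne : (⋂ i : {C : Clopens X // C ∈ F}, (i.1 : Set X)).Nonempty := by
        apply IsCompact.nonempty_iInter_of_directed_nonempty_isCompact_isClosed
        · rintro ⟨a, ha⟩ ⟨b, hb⟩
          refine ⟨⟨a ⊓ b, hF.1.1.2.1 a ha b hb⟩, ?_, ?_⟩ <;>
            simp [Set.inter_subset_left, Set.inter_subset_right]
        · rintro ⟨a, ha⟩
          rw [Set.nonempty_iff_ne_empty]
          intro h
          exact hF.1.2 (by rwa [show a = ⊥ from Clopens.ext h] at ha)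
        · exact fun i => i.1.isClopen.isClosed.isCompact
        · exact fun i => i.1.isClopen.isClosed
      obtain ⟨x, hx⟩ := hne
      simp only [Set.mem_iInter] at hx
      refine ⟨x, Subtype.ext ?_⟩
      ext C
      simp only [Set.mem_setOf_eq]
      constructor
      · intro hC
        rcases hF.2 C with ⟨h1, -⟩ | ⟨h1, -⟩
        · exact h1
        · exact absurd (hx ⟨Cᶜ, h1⟩) (by simpa using hC)
      · exact fun hC => hx ⟨C, hC⟩
    intro U hU
    have : (fun x : X => (⟨{C : Clopens X | x ∈ C}, gmem_ultra' x⟩ : USpace (Clopens X))) '' U =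
        ⋃ C ∈ {C : Clopens X | (C : Set X) ⊆ U}, Ubasic C := by
      ext F
      simp only [Set.mem_iUnion, Set.mem_image, Set.mem_setOf_eq]
      constructor
      · rintro ⟨x, hxU, rfl⟩
        obtain ⟨V, hV, hxV, hVU⟩ := isTopologicalBasis_isClopen.exists_subset_of_mem_open hxU hU
        exact ⟨⟨V, hV⟩, hVU, hxV⟩
      · rintro ⟨C, hCU, hCF⟩
        obtain ⟨x, rfl⟩ := hsurj F
        exact ⟨x, hCU hCF, rfl⟩
    rw [this]
    exact isOpen_biUnion fun C _ => isOpen_generateFrom_of_mem ⟨C, rfl⟩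
  -- Injective
  · intro x y hxy
    by_contra hne
    obtain ⟨U, hU, hxU, hyU⟩ := exists_isClopen_of_totally_separated hne
    have : (⟨U, hU⟩ : Clopens X) ∈ ({C : Clopens X | x ∈ C} : Set (Clopens X)) := hxU
    rw [show ({C : Clopens X | x ∈ C} : Set (Clopens X)) = {C : Clopens X | y ∈ C} from
      congrArg Subtype.val hxy] at this
    exact hyU this
  -- Surjective (reprove; same as above)
  · rintro ⟨F, hF⟩
    have htop : (⊤ : Clopens X) ∈ F := by
      obtain ⟨a, ha⟩ := hF.1.1.1
      exact hF.1.1.2.2 a ha ⊤ le_top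
    haveI : Nonempty {C : Clopens X // C ∈ F} := ⟨⟨⊤, htop⟩⟩
    have hne : (⋂ i : {C : Clopens X // C ∈ F}, (i.1 : Set X)).Nonempty := by
      apply IsCompact.nonempty_iInter_of_directed_nonempty_isCompact_isClosed
      · rintro ⟨a, ha⟩ ⟨b, hb⟩
        refine ⟨⟨a ⊓ b, hF.1.1.2.1 a ha b hb⟩, ?_, ?_⟩ <;>
          simp [Set.inter_subset_left, Set.inter_subset_right]
      · rintro ⟨a, ha⟩
        rw [Set.nonempty_iff_ne_empty]
        intro h
        exact hF.1.2 (by rwa [show a = ⊥ from Clopens.ext h] at ha)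
      · exact fun i => i.1.isClopen.isClosed.isCompact
      · exact fun i => i.1.isClopen.isClosed
    obtain ⟨x, hx⟩ := hne
    simp only [Set.mem_iInter] at hx
    refine ⟨x, Subtype.ext ?_⟩
    ext C
    simp only [Set.mem_setOf_eq]
    constructor
    · intro hC
      rcases hF.2 C with ⟨h1, -⟩ | ⟨h1, -⟩
      · exact h1
      · exact absurd (hx ⟨Cᶜ, h1⟩) (by simpa using hC)
    · exact fun hC => hx ⟨C, hC⟩
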